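/- arXiv:2410.21985 — 3 statements merged into one kernel-verified Lean document; each statement's English description precedes it below -/
import Mathlib

section
/- Let a, b ∈ ℂ and let ε ∈ (0, 1/4). Then there exists a constant C > 0 (depending only on a, b, ε) such that for every n ∈ ℤ_{≥0} and every z ∈ ℂ with |z + b − j| ≥ ε for all j ∈ {1, …, n}, one has ∏_{j=1}^{n} |(−a + j − z)/(−b + j − z)| ≤ C (n+1)^{2|a−b|}. -/
open Complex

private lemma myharm : ∀ n : ℕ, ∑ i ∈ Finset.range n, (1 : ℝ) / (i + 1) ≤ 1 + Real.log n := by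
  intro n
  induction n with
  | zero => simp
  | succ n ih =>
    rcases Nat.eq_zero_or_pos n with h0 | hpos
    · subst h0; simp
    · rw [Finset.sum_range_succ]
      have hn : (0 : ℝ) < n := by exact_mod_cast hpos
      have hx : (0 : ℝ) < (n : ℝ) / ((n : ℝ) + 1) := by positivity
      have h1 := Real.log_le_sub_one_of_pos hx
      rw [Real.log_div (by positivity) (by positivity)] at h1
      have h2 : (n : ℝ) / ((n : ℝ) + 1) - 1 = -(1 / ((n : ℝ) + 1)) := by
        field_simp
        ring
      rw [h2] at h1
      push_cast
      linarith

private lemma myharm2 (n : ℕ) :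
    ∑ i ∈ Finset.range n, (1 : ℝ) / (i + 1) ≤ 1 + Real.log ((n : ℝ) + 1) := by
  have h : Real.log (n : ℝ) ≤ Real.log ((n : ℝ) + 1) := by
    rcases Nat.eq_zero_or_pos n with h0 | hpos
    · subst h0; simp
    · exact Real.log_le_log (by exact_mod_cast hpos) (by linarith)
  linarith [myharm n]

private lemma mykey (ε : ℝ) (hε : 0 < ε) :
    ∀ n : ℕ, ∀ r : ℝ, (∑ i ∈ Finset.range (n + 1), 1 / max ε |(i : ℝ) + 1 - r|) ≤
      2 / ε + ∑ i ∈ Finset.range n, 2 / ((i : ℝ) + 1) := by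
  intro n
  induction n with
  | zero =>
    intro r
    simp only [Finset.sum_range_one, Finset.range_zero, Finset.sum_empty, Nat.cast_zero,
      zero_add, add_zero]
    set M := max ε |(1 : ℝ) - r| with hMdef
    have h1 : ε ≤ M := le_max_left _ _
    have h2 : 1 / M ≤ 1 / ε := one_div_le_one_div_of_le hε h1
    have h4 : 2 / ε = 1 / ε + 1 / ε := by ring
    have h5 : 0 < 1 / ε := by positivity
    linarith
  | succ n ih =>
    intro r
    have hspan : (n : ℝ) + 1 ≤ |(n : ℝ) + 1 + 1 - r| + |(0 : ℝ) + 1 - r| := by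
      have h := abs_sub ((n : ℝ) + 1 + 1 - r) ((0 : ℝ) + 1 - r)
      have he : ((n : ℝ) + 1 + 1 - r) - ((0 : ℝ) + 1 - r) = (n : ℝ) + 1 := by ring
      rw [he] at h
      calc (n : ℝ) + 1 ≤ |(n : ℝ) + 1| := le_abs_self _
        _ ≤ _ := h
    have hn1 : (0 : ℝ) < (n : ℝ) + 1 := by positivity
    rcases le_total (((n : ℝ) + 1) / 2) |(n : ℝ) + 1 + 1 - r| with hc | hc
    · -- top endpoint is far
      rw [Finset.sum_range_succ]
      have hf : 1 / max ε |((n + 1 : ℕ) : ℝ) + 1 - r| ≤ 2 / ((n : ℝ) + 1) := by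
        have hcast : ((n + 1 : ℕ) : ℝ) + 1 - r = (n : ℝ) + 1 + 1 - r := by push_cast; ring
        rw [hcast]
        have hM : ((n : ℝ) + 1) / 2 ≤ max ε |(n : ℝ) + 1 + 1 - r| :=
          le_trans hc (le_max_right _ _)
        have hMpos : (0 : ℝ) < max ε |(n : ℝ) + 1 + 1 - r| :=
          lt_of_lt_of_le hε (le_max_left _ _)
        rw [div_le_div_iff₀ hMpos hn1]
        set M := max ε |(n : ℝ) + 1 + 1 - r| with hMdef
        linarith
      refine le_trans (add_le_add (ih r) hf) ?_
      rw [Finset.sum_range_succ]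
      linarith
    · -- bottom endpoint is far
      have hcb : ((n : ℝ) + 1) / 2 ≤ |(0 : ℝ) + 1 - r| := by
        set A := |(n : ℝ) + 1 + 1 - r|
        set B := |(0 : ℝ) + 1 - r|
        linarith
      rw [Finset.sum_range_succ']
      have hshift : (∑ i ∈ Finset.range (n + 1), 1 / max ε |((i + 1 : ℕ) : ℝ) + 1 - r|) =
          ∑ i ∈ Finset.range (n + 1), 1 / max ε |(i : ℝ) + 1 - (r - 1)| := by
        apply Finset.sum_congr rfl
        intro i _
        congr 2
        push_cast
        ring
      rw [hshift]
      have hf : 1 / max ε |((0 : ℕ) : ℝ) + 1 - r| ≤ 2 / ((n : ℝ) + 1) := by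
        have hM : ((n : ℝ) + 1) / 2 ≤ max ε |((0 : ℕ) : ℝ) + 1 - r| := by
          refine le_trans ?_ (le_max_right _ _)
          simpa using hcb
        have hMpos : (0 : ℝ) < max ε |((0 : ℕ) : ℝ) + 1 - r| :=
          lt_of_lt_of_le hε (le_max_left _ _)
        rw [div_le_div_iff₀ hMpos hn1]
        set M := max ε |((0 : ℕ) : ℝ) + 1 - r| with hMdef
        linarith
      refine le_trans (add_le_add (ih (r - 1)) hf) ?_
      rw [Finset.sum_range_succ]
      linarith

private lemma icc_prod_range (f : ℕ → ℝ) (n : ℕ) :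
    (∏ j ∈ Finset.Icc 1 n, f j) = ∏ i ∈ Finset.range n, f (i + 1) := by
  induction n with
  | zero => simp
  | succ n ih =>
    rw [Finset.prod_Icc_succ_top (Nat.succ_le_succ (Nat.zero_le n)), ih,
      Finset.prod_range_succ]

private lemma icc_sum_range (f : ℕ → ℝ) (n : ℕ) :
    (∑ j ∈ Finset.Icc 1 n, f j) = ∑ i ∈ Finset.range n, f (i + 1) := by
  induction n with
  | zero => simp
  | succ n ih =>
    rw [Finset.sum_Icc_succ_top (Nat.succ_le_succ (Nat.zero_le n)), ih,
      Finset.sum_range_succ]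

theorem stmt5 (a b : ℂ) (ε : ℝ) (hε0 : 0 < ε) (hε4 : ε < 1 / 4) :
    ∃ C > (0 : ℝ), ∀ n : ℕ, ∀ z : ℂ,
      (∀ j ∈ Finset.Icc 1 n, ε ≤ ‖z + b - (j : ℂ)‖) →
      (∏ j ∈ Finset.Icc 1 n, ‖(-a + (j : ℂ) - z) / (-b + (j : ℂ) - z)‖) ≤
        C * ((n : ℝ) + 1) ^ (2 * ‖a - b‖) := by
  set d := ‖a - b‖ with hd
  have hd0 : 0 ≤ d := norm_nonneg _
  refine ⟨Real.exp (d * (2 / ε + 2)), Real.exp_pos _, ?_⟩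
  intro n z hz
  set r := (z + b).re with hr
  -- per-factor bound
  have hfac : ∀ j ∈ Finset.Icc 1 n,
      ‖(-a + (j : ℂ) - z) / (-b + (j : ℂ) - z)‖ ≤
        Real.exp (d * (1 / max ε |(j : ℝ) - r|)) := by
    intro j hj
    have hM : ε ≤ ‖z + b - (j : ℂ)‖ := hz j hj
    have hMpos : 0 < ‖z + b - (j : ℂ)‖ := lt_of_lt_of_le hε0 hM
    have hre : |(j : ℝ) - r| ≤ ‖z + b - (j : ℂ)‖ := by
      have h1 := Complex.abs_re_le_norm (z + b - (j : ℂ))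
      have h2 : (z + b - (j : ℂ)).re = r - j := by
        simp [hr, Complex.sub_re, Complex.add_re]
      rw [h2] at h1
      rw [abs_sub_comm]
      exact h1
    have hmax : max ε |(j : ℝ) - r| ≤ ‖z + b - (j : ℂ)‖ := max_le hM hre
    have hmaxpos : 0 < max ε |(j : ℝ) - r| := lt_of_lt_of_le hε0 (le_max_left _ _)
    have hden : ‖-b + (j : ℂ) - z‖ = ‖z + b - (j : ℂ)‖ := by
      rw [show -b + (j : ℂ) - z = -(z + b - (j : ℂ)) by ring, norm_neg]
    have hnum : ‖-a + (j : ℂ) - z‖ ≤ ‖z + b - (j : ℂ)‖ + d := by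
      rw [show -a + (j : ℂ) - z = -(z + b - (j : ℂ)) + (b - a) by ring]
      refine le_trans (norm_add_le _ _) ?_
      rw [norm_neg]
      have h3 : ‖b - a‖ = d := by rw [hd, norm_sub_rev]
      rw [h3]
    calc ‖(-a + (j : ℂ) - z) / (-b + (j : ℂ) - z)‖
        = ‖-a + (j : ℂ) - z‖ / ‖-b + (j : ℂ) - z‖ := norm_div _ _
      _ ≤ (‖z + b - (j : ℂ)‖ + d) / ‖z + b - (j : ℂ)‖ := by
          rw [hden]; gcongr
      _ = 1 + d / ‖z + b - (j : ℂ)‖ := by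
          rw [add_div, div_self hMpos.ne']
      _ ≤ 1 + d / max ε |(j : ℝ) - r| := by gcongr
      _ ≤ Real.exp (d * (1 / max ε |(j : ℝ) - r|)) := by
          have h := Real.add_one_le_exp (d / max ε |(j : ℝ) - r|)
          rw [mul_one_div]
          linarith
  -- sum bound
  have hsum : (∑ j ∈ Finset.Icc 1 n, 1 / max ε |(j : ℝ) - r|) ≤
      2 / ε + 2 + 2 * Real.log ((n : ℝ) + 1) := by
    rw [icc_sum_range (fun j => 1 / max ε |(j : ℝ) - r|) n]
    have hcast : (∑ i ∈ Finset.range n, 1 / max ε |((i + 1 : ℕ) : ℝ) - r|) =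
        ∑ i ∈ Finset.range n, 1 / max ε |(i : ℝ) + 1 - r| := by
      apply Finset.sum_congr rfl
      intro i _
      congr 2
      push_cast
      ring
    rw [hcast]
    have hlog : 0 ≤ Real.log ((n : ℝ) + 1) := Real.log_nonneg (by simp)
    rcases n with _ | m
    · simp
      positivity
    · have h1 := mykey ε hε0 m r
      have h2 : (∑ i ∈ Finset.range m, 2 / ((i : ℝ) + 1)) ≤
          2 * (1 + Real.log ((m : ℝ) + 1)) := by
        have h5 := myharm2 m
        have he : (∑ i ∈ Finset.range m, 2 / ((i : ℝ) + 1)) =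
            2 * ∑ i ∈ Finset.range m, (1 : ℝ) / ((i : ℝ) + 1) := by
          rw [Finset.mul_sum]
          apply Finset.sum_congr rfl
          intro i _
          ring
        rw [he]
        linarith
      have h3 : Real.log ((m : ℝ) + 1) ≤ Real.log (((m + 1 : ℕ) : ℝ) + 1) := by
        apply Real.log_le_log (by positivity)
        push_cast
        linarith
      calc (∑ i ∈ Finset.range (m + 1), 1 / max ε |(i : ℝ) + 1 - r|)
          ≤ 2 / ε + ∑ i ∈ Finset.range m, 2 / ((i : ℝ) + 1) := h1
        _ ≤ 2 / ε + 2 * (1 + Real.log ((m : ℝ) + 1)) := by linarith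
        _ ≤ 2 / ε + 2 + 2 * Real.log (((m + 1 : ℕ) : ℝ) + 1) := by linarith
  -- put it together
  have hnpos : (0 : ℝ) < (n : ℝ) + 1 := by positivity
  calc (∏ j ∈ Finset.Icc 1 n, ‖(-a + (j : ℂ) - z) / (-b + (j : ℂ) - z)‖)
      ≤ ∏ j ∈ Finset.Icc 1 n, Real.exp (d * (1 / max ε |(j : ℝ) - r|)) := by
        apply Finset.prod_le_prod
        · intro j _; exact norm_nonneg _
        · exact hfac
    _ = Real.exp (∑ j ∈ Finset.Icc 1 n, d * (1 / max ε |(j : ℝ) - r|)) :=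
        (Real.exp_sum _ _).symm
    _ = Real.exp (d * ∑ j ∈ Finset.Icc 1 n, 1 / max ε |(j : ℝ) - r|) := by
        rw [← Finset.mul_sum]
    _ ≤ Real.exp (d * (2 / ε + 2 + 2 * Real.log ((n : ℝ) + 1))) := by
        apply Real.exp_le_exp.2
        exact mul_le_mul_of_nonneg_left hsum hd0
    _ = Real.exp (d * (2 / ε + 2)) * ((n : ℝ) + 1) ^ (2 * d) := by
        rw [Real.rpow_def_of_pos hnpos, ← Real.exp_add]
        ring_nf
end

section
/- Assume a, b ∈ ℂ and c, d ∈ ℂ∖ℤ_{≤0}, and set p := Re(a−c) + max{0, Re(b−d)}. Then there exist constants K, z₀ > 0 such that for every n ∈ ℤ_{≥0} and every real z ≥ z₀, one has |₂F₂[a, b+n; c, d+n; z]| ≤ K (n+1)^{2|b−d|} z^{p} e^{z}. -/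
open Complex

/-- Pochhammer symbol `(a)_n = a(a+1)⋯(a+n-1)`. -/
noncomputable def poch (a : ℂ) (n : ℕ) : ℂ := ∏ j ∈ Finset.range n, (a + j)

/-- Generalized hypergeometric function `₂F₂[a1,a2;b1,b2;z]`. -/
noncomputable def F22 (a1 a2 b1 b2 z : ℂ) : ℂ :=
  ∑' n : ℕ, poch a1 n * poch a2 n / (poch b1 n * poch b2 n) * z ^ n / (n.factorial : ℂ)

open Finset Filter


lemma aux_norm_one_add (w : ℂ) : ‖1 + w‖ ≤ Real.exp (w.re + ‖w‖^2 / 2) := by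
  have h2 : ‖1 + w‖^2 = 1 + (2 * w.re + ‖w‖^2) := by
    rw [Complex.sq_norm, Complex.sq_norm]
    simp [Complex.normSq_apply]; ring
  have h3 : ‖1 + w‖^2 ≤ Real.exp (2 * w.re + ‖w‖^2) := by
    rw [h2]; have := Real.add_one_le_exp (2 * w.re + ‖w‖^2); linarith
  have h4 : Real.exp (2 * w.re + ‖w‖^2) = (Real.exp (w.re + ‖w‖^2/2))^2 := by
    rw [← Real.exp_nat_mul]; ring_nf
  nlinarith [norm_nonneg (1 + w), Real.exp_pos (w.re + ‖w‖^2/2)]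

lemma harmonic_lb (k : ℕ) : Real.log (k+1) ≤ ∑ j ∈ range k, 1/((j:ℝ)+1) := by
  induction k with
  | zero => simp
  | succ k ih =>
    rw [Finset.sum_range_succ]
    have h1 : Real.log ((k+1)+1) - Real.log (k+1) ≤ 1/((k:ℝ)+1) := by
      rw [← Real.log_div (by positivity) (by positivity)]
      have := Real.log_le_sub_one_of_pos (show (0:ℝ) < ((k:ℝ)+1+1)/((k:ℝ)+1) by positivity)
      have hk : (0:ℝ) < (k:ℝ)+1 := by positivity
      rw [div_sub_one (ne_of_gt hk)] at this
      calc Real.log (((k:ℝ)+1+1)/((k:ℝ)+1)) ≤ ((k:ℝ)+1+1 - ((k:ℝ)+1))/((k:ℝ)+1) := this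
        _ = 1/((k:ℝ)+1) := by ring_nf
    push_cast
    push_cast at ih
    linarith

lemma harmonic_ub (k : ℕ) : ∑ j ∈ range k, 1/((j:ℝ)+1) ≤ 1 + Real.log (k+1) := by
  have key : ∀ k : ℕ, 1 ≤ k → ∑ j ∈ range k, 1/((j:ℝ)+1) ≤ 1 + Real.log k := by
    intro k hk
    induction k with
    | zero => omega
    | succ k ih =>
      rcases Nat.eq_or_lt_of_le hk with h | h
      · simp [← h]
      · have hk1 : 1 ≤ k := by omega
        rw [Finset.sum_range_succ]
        have h1 : 1/((k:ℝ)+1) ≤ Real.log ((k:ℝ)+1) - Real.log k := by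
          rw [← Real.log_div (by positivity) (by positivity)]
          have hkpos : (0:ℝ) < k := by exact_mod_cast hk1
          have := Real.log_le_sub_one_of_pos (show (0:ℝ) < (k:ℝ)/((k:ℝ)+1) by positivity)
          have h2 : Real.log (((k:ℝ)+1)/k) = - Real.log ((k:ℝ)/((k:ℝ)+1)) := by
            rw [← Real.log_inv]; congr 1; field_simp
          rw [h2]
          have h3 : (k:ℝ)/((k:ℝ)+1) - 1 = -(1/((k:ℝ)+1)) := by field_simp; ring
          linarith [this, h3 ▸ this]
        have := ih hk1
        push_cast at this ⊢
        linarith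
  rcases Nat.eq_zero_or_pos k with h | h
  · simp [h]
  · calc ∑ j ∈ range k, 1/((j:ℝ)+1) ≤ 1 + Real.log k := key k h
      _ ≤ 1 + Real.log (k+1) := by
        have : (k:ℝ) ≤ (k:ℝ)+1 := by linarith
        have := Real.log_le_log (by exact_mod_cast h) this
        linarith

lemma sum_inv_sq (k : ℕ) : ∑ j ∈ range k, 1/(((j:ℝ)+1))^2 ≤ 2 := by
  have key : ∀ k : ℕ, 1 ≤ k → ∑ j ∈ range k, 1/(((j:ℝ)+1))^2 ≤ 2 - 1/(k:ℝ) := by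
    intro k hk
    induction k with
    | zero => omega
    | succ k ih =>
      rcases Nat.eq_or_lt_of_le hk with h | h
      · simp [← h]; norm_num
      · have hk1 : 1 ≤ k := by omega
        have hkpos : (0:ℝ) < k := by exact_mod_cast hk1
        rw [Finset.sum_range_succ]
        have h1 : 1/(((k:ℝ))+1)^2 ≤ 1/(k:ℝ) - 1/((k:ℝ)+1) := by
          rw [div_sub_div _ _ (ne_of_gt hkpos) (by positivity)]
          rw [div_le_div_iff₀ (by positivity) (by positivity)]
          nlinarith
        have := ih hk1
        push_cast at this ⊢
        linarith
  rcases Nat.eq_zero_or_pos k with h | h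
  · simp [h]
  · have hkpos : (0:ℝ) < k := by exact_mod_cast h
    have := key k h
    have h2 : (0:ℝ) < 1/(k:ℝ) := by positivity
    linarith

lemma exists_lb (v : ℂ) (hv : ∀ m : ℕ, v ≠ -(m:ℂ)) :
    ∃ c₀ > (0:ℝ), ∀ m : ℕ, c₀ * ((m:ℝ)+1) ≤ ‖v + m‖ := by
  obtain ⟨N, hN⟩ := exists_nat_gt (2*‖v‖ + 2)
  have hNpos : 0 < N := by
    rcases Nat.eq_zero_or_pos N with h | h
    · exfalso; rw [h] at hN; push_cast at hN; nlinarith [norm_nonneg v]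
    · exact h
  have hpos : ∀ m : ℕ, 0 < ‖v + m‖ := by
    intro m
    rw [norm_pos_iff]
    intro h
    exact hv m (by linear_combination h)
  have hne : (Finset.range N).Nonempty := ⟨0, Finset.mem_range.mpr hNpos⟩
  set c₁ := (Finset.range N).inf' hne (fun m => ‖v + m‖/((m:ℝ)+1)) with hc₁
  have hc₁pos : 0 < c₁ := by
    rw [hc₁, Finset.lt_inf'_iff]
    intro m _
    have := hpos m
    positivity
  refine ⟨min (1/2) c₁, by positivity, fun m => ?_⟩
  rcases lt_or_ge m N with h | h
  · have h1 : c₁ ≤ ‖v + m‖/((m:ℝ)+1) :=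
      Finset.inf'_le _ (Finset.mem_range.mpr h)
    have h2 : (0:ℝ) < (m:ℝ)+1 := by positivity
    calc min (1/2) c₁ * ((m:ℝ)+1) ≤ c₁ * ((m:ℝ)+1) := by
          apply mul_le_mul_of_nonneg_right (min_le_right _ _) (le_of_lt h2)
      _ ≤ ‖v + m‖ := (le_div_iff₀ h2).mp h1
  · have hm : 2*‖v‖ + 2 ≤ (m:ℝ) := le_trans (le_of_lt hN) (by exact_mod_cast h)
    have h1 : ‖v + m‖ ≥ (m:ℝ) - ‖v‖ := by
      have h3 := norm_sub_norm_le ((m:ℂ)) (-v)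
      simp only [norm_neg, sub_neg_eq_add] at h3
      have hnm : ‖(m:ℂ)‖ = (m:ℝ) := by simp
      rw [hnm] at h3
      have h4 : ‖(m:ℂ) + v‖ = ‖v + m‖ := by rw [add_comm]
      rw [h4] at h3
      linarith
    calc min (1/2) c₁ * ((m:ℝ)+1) ≤ (1/2) * ((m:ℝ)+1) := by
          apply mul_le_mul_of_nonneg_right (min_le_left _ _) (by positivity)
      _ ≤ (m:ℝ) - ‖v‖ := by nlinarith [norm_nonneg v]
      _ ≤ ‖v + m‖ := h1
/-- per-factor bound -/
lemma factor_bound (u v : ℂ) (c₀ D : ℝ) (hc₀ : 0 < c₀)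
    (hlb : ∀ m : ℕ, c₀ * ((m:ℝ)+1) ≤ ‖v + m‖)
    (hD : ‖u-v‖ * ‖1-v‖ / c₀ + ‖u-v‖^2 / (2*c₀^2) ≤ D) (m : ℕ) :
    ‖u + m‖ ≤ ‖v + m‖ * Real.exp ((u-v).re/((m:ℝ)+1) + D/((m:ℝ)+1)^2) := by
  have hm1 : (0:ℝ) < (m:ℝ)+1 := by positivity
  have hvm : ‖v + (m:ℂ)‖ > 0 := lt_of_lt_of_le (by positivity) (hlb m)
  have hvm0 : (v + (m:ℂ)) ≠ 0 := by intro h; rw [h] at hvm; simp at hvm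
  set w : ℂ := (u - v)/(v + m) with hw
  have key : u + m = (v + m) * (1 + w) := by
    rw [hw]; field_simp; ring
  have h1 : ‖u + m‖ ≤ ‖v + m‖ * Real.exp (w.re + ‖w‖^2/2) := by
    rw [key, norm_mul]
    exact mul_le_mul_of_nonneg_left (aux_norm_one_add w) (norm_nonneg _)
  refine le_trans h1 (mul_le_mul_of_nonneg_left (Real.exp_le_exp.mpr ?_) (norm_nonneg _))
  -- w.re + ‖w‖²/2 ≤ (u-v).re/(m+1) + D/(m+1)²
  have hwre : w.re ≤ (u-v).re/((m:ℝ)+1) + ‖u-v‖*‖1-v‖/(c₀ * ((m:ℝ)+1)^2) := by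
    have hsplit : w = (u-v)/(((m:ℝ)+1:ℝ):ℂ) + (u-v)*(1-v)/((v+m)*(((m:ℝ)+1:ℝ):ℂ)) := by
      rw [hw]
      have hm0 : ((((m:ℝ)+1:ℝ)):ℂ) ≠ 0 := by
        simp only [ne_eq, ofReal_eq_zero]; positivity
      have hcast : ((((m:ℝ)+1:ℝ)):ℂ) = (m:ℂ)+1 := by push_cast; ring
      have hM : ((m:ℂ)+1) ≠ 0 := Nat.cast_add_one_ne_zero m
      rw [hcast, div_add_div _ _ hM (mul_ne_zero hvm0 hM),
        div_eq_div_iff hvm0 (mul_ne_zero hM (mul_ne_zero hvm0 hM))]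
      ring
    have hre1 : ((u-v)/(((m:ℝ)+1:ℝ):ℂ)).re = (u-v).re/((m:ℝ)+1) := by
      rw [Complex.div_ofReal_re]
    have hre2 : ((u-v)*(1-v)/((v+m)*(((m:ℝ)+1:ℝ):ℂ))).re ≤ ‖u-v‖*‖1-v‖/(c₀*((m:ℝ)+1)^2) := by
      refine le_trans (Complex.re_le_norm _) ?_
      rw [norm_div, norm_mul, norm_mul]
      have hnorm : ‖(((m:ℝ)+1:ℝ):ℂ)‖ = (m:ℝ)+1 := by
        rw [Complex.norm_real, Real.norm_eq_abs, abs_of_pos hm1]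
      rw [hnorm]
      apply div_le_div_of_nonneg_left (by positivity) (by positivity)
      calc c₀ * ((m:ℝ)+1)^2 = (c₀ * ((m:ℝ)+1)) * ((m:ℝ)+1) := by ring
        _ ≤ ‖v + m‖ * ((m:ℝ)+1) := mul_le_mul_of_nonneg_right (hlb m) (le_of_lt hm1)
      -- need: c₀((m+1))² ≤ ‖v+m‖(m+1) -- done
    calc w.re = ((u-v)/(((m:ℝ)+1:ℝ):ℂ)).re + ((u-v)*(1-v)/((v+m)*(((m:ℝ)+1:ℝ):ℂ))).re := by
          rw [← Complex.add_re, ← hsplit]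
      _ ≤ (u-v).re/((m:ℝ)+1) + ‖u-v‖*‖1-v‖/(c₀*((m:ℝ)+1)^2) := by
          rw [hre1]; exact add_le_add (le_refl _) hre2
  have hsq : (c₀*((m:ℝ)+1))^2 ≤ ‖v+(m:ℂ)‖^2 := by
    apply pow_le_pow_left₀ (by positivity) (hlb m)
  have hwnorm : ‖w‖^2 ≤ ‖u-v‖^2/(c₀^2*((m:ℝ)+1)^2) := by
    rw [hw, norm_div, div_pow]
    rw [show c₀^2*((m:ℝ)+1)^2 = (c₀*((m:ℝ)+1))^2 by ring]
    exact div_le_div_of_nonneg_left (by positivity) (by positivity) hsq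
  have hcomb : ‖u-v‖*‖1-v‖/(c₀*((m:ℝ)+1)^2) + ‖u-v‖^2/(c₀^2*((m:ℝ)+1)^2)/2 ≤ D/((m:ℝ)+1)^2 := by
    have e1 : ‖u-v‖*‖1-v‖/(c₀*((m:ℝ)+1)^2) = (‖u-v‖*‖1-v‖/c₀)/((m:ℝ)+1)^2 := by
      rw [div_div]
    have e2 : ‖u-v‖^2/(c₀^2*((m:ℝ)+1)^2)/2 = (‖u-v‖^2/(2*c₀^2))/((m:ℝ)+1)^2 := by
      rw [div_div, div_div]; congr 1; ring
    rw [e1, e2, ← add_div]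
    gcongr
  linarith [hwre, hwnorm, hcomb]

lemma poch_core (u v : ℂ) (hv : ∀ m : ℕ, v ≠ -(m:ℂ)) :
    ∃ C > (0:ℝ), ∀ n k : ℕ, ‖poch (u + n) k‖ ≤
      C * Real.exp ((u-v).re * ∑ j ∈ range k, 1/((n:ℝ)+(j:ℝ)+1)) * ‖poch (v + n) k‖ := by
  obtain ⟨c₀, hc₀, hlb⟩ := exists_lb v hv
  set τ := (u-v).re with hτ
  set D := ‖u-v‖*‖1-v‖/c₀ + ‖u-v‖^2/(2*c₀^2) with hD
  have hD0 : 0 ≤ D := by positivity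
  refine ⟨Real.exp (2*D), Real.exp_pos _, fun n k => ?_⟩
  have hfac : ∀ j ∈ range k, ‖u + (n:ℂ) + (j:ℂ)‖ ≤
      ‖v + (n:ℂ) + (j:ℂ)‖ * Real.exp (τ/((n:ℝ)+(j:ℝ)+1) + D/((n:ℝ)+(j:ℝ)+1)^2) := by
    intro j _
    have h := factor_bound u v c₀ D hc₀ hlb (le_refl D) (n+j)
    have e1 : u + ((n+j : ℕ):ℂ) = u + (n:ℂ) + (j:ℂ) := by push_cast; ring
    have e2 : v + ((n+j : ℕ):ℂ) = v + (n:ℂ) + (j:ℂ) := by push_cast; ring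
    have e3 : ((n+j : ℕ):ℝ) + 1 = (n:ℝ)+(j:ℝ)+1 := by push_cast; ring
    rw [e1, e2, e3] at h
    exact h
  have hH0 : (0:ℝ) ≤ ∑ j ∈ range k, 1/((n:ℝ)+(j:ℝ)+1) := by
    apply Finset.sum_nonneg; intro j _; positivity
  calc ‖poch (u + n) k‖ = ∏ j ∈ range k, ‖u + (n:ℂ) + (j:ℂ)‖ := by
        rw [poch, norm_prod]
    _ ≤ ∏ j ∈ range k, (‖v + (n:ℂ) + (j:ℂ)‖ * Real.exp (τ/((n:ℝ)+(j:ℝ)+1) + D/((n:ℝ)+(j:ℝ)+1)^2)) :=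
        Finset.prod_le_prod (fun j _ => norm_nonneg _) hfac
    _ = (∏ j ∈ range k, ‖v + (n:ℂ) + (j:ℂ)‖) *
          Real.exp (∑ j ∈ range k, (τ/((n:ℝ)+(j:ℝ)+1) + D/((n:ℝ)+(j:ℝ)+1)^2)) := by
        rw [Finset.prod_mul_distrib, Real.exp_sum]
    _ ≤ Real.exp (2*D) * Real.exp (τ * ∑ j ∈ range k, 1/((n:ℝ)+(j:ℝ)+1)) * ‖poch (v + n) k‖ := by
        rw [poch, norm_prod]
        have hsum : ∑ j ∈ range k, (τ/((n:ℝ)+(j:ℝ)+1) + D/((n:ℝ)+(j:ℝ)+1)^2) ≤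
            τ * (∑ j ∈ range k, 1/((n:ℝ)+(j:ℝ)+1)) + 2*D := by
          rw [Finset.sum_add_distrib]
          have h1 : ∑ j ∈ range k, τ/((n:ℝ)+(j:ℝ)+1) = τ * ∑ j ∈ range k, 1/((n:ℝ)+(j:ℝ)+1) := by
            rw [Finset.mul_sum]
            apply Finset.sum_congr rfl
            intro j _; rw [mul_one_div]
          have h2 : ∑ j ∈ range k, D/((n:ℝ)+(j:ℝ)+1)^2 ≤ 2*D := by
            calc ∑ j ∈ range k, D/((n:ℝ)+(j:ℝ)+1)^2 ≤ ∑ j ∈ range k, D * (1/((j:ℝ)+1)^2) := by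
                  apply Finset.sum_le_sum
                  intro j _
                  rw [div_eq_mul_one_div]
                  apply mul_le_mul_of_nonneg_left _ hD0
                  apply div_le_div_of_nonneg_left one_pos.le (by positivity)
                  apply pow_le_pow_left₀ (by positivity)
                  have : (0:ℝ) ≤ (n:ℝ) := Nat.cast_nonneg n
                  linarith
              _ = D * ∑ j ∈ range k, 1/((j:ℝ)+1)^2 := by rw [Finset.mul_sum]
              _ ≤ D * 2 := mul_le_mul_of_nonneg_left (sum_inv_sq k) hD0
              _ = 2*D := by ring
          linarith
        calc (∏ j ∈ range k, ‖v + (n:ℂ) + (j:ℂ)‖) * Real.exp (∑ j ∈ range k, (τ/((n:ℝ)+(j:ℝ)+1) + D/((n:ℝ)+(j:ℝ)+1)^2))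
            ≤ (∏ j ∈ range k, ‖v + (n:ℂ) + (j:ℂ)‖) * (Real.exp (2*D) * Real.exp (τ * ∑ j ∈ range k, 1/((n:ℝ)+(j:ℝ)+1))) := by
              apply mul_le_mul_of_nonneg_left _ (Finset.prod_nonneg fun j _ => norm_nonneg _)
              rw [← Real.exp_add]
              apply Real.exp_le_exp.mpr
              linarith [hsum]
          _ = Real.exp (2*D) * Real.exp (τ * ∑ j ∈ range k, 1/((n:ℝ)+(j:ℝ)+1)) * ∏ j ∈ range k, ‖v + (n:ℂ) + (j:ℂ)‖ := by ring

lemma pochA (u v : ℂ) (hv : ∀ m : ℕ, v ≠ -(m:ℂ)) :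
    ∃ C > (0:ℝ), ∀ n k : ℕ, ‖poch (u + n) k‖ ≤
      C * ((k:ℝ)+1) ^ (max 0 (u-v).re) * ‖poch (v + n) k‖ := by
  obtain ⟨C, hC, hcore⟩ := poch_core u v hv
  set τ := (u-v).re with hτ
  refine ⟨C * Real.exp (max 0 τ), by positivity, fun n k => ?_⟩
  refine le_trans (hcore n k) ?_
  have hk1 : (0:ℝ) < (k:ℝ)+1 := by positivity
  have hexp : Real.exp (τ * ∑ j ∈ range k, 1/((n:ℝ)+(j:ℝ)+1)) ≤
      Real.exp (max 0 τ) * ((k:ℝ)+1) ^ (max 0 τ) := by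
    have hH0 : (0:ℝ) ≤ ∑ j ∈ range k, 1/((n:ℝ)+(j:ℝ)+1) := by
      apply Finset.sum_nonneg; intro j _; positivity
    have hHle : ∑ j ∈ range k, 1/((n:ℝ)+(j:ℝ)+1) ≤ 1 + Real.log ((k:ℝ)+1) := by
      refine le_trans (Finset.sum_le_sum fun j _ => ?_) (harmonic_ub k)
      apply div_le_div_of_nonneg_left one_pos.le (by positivity)
      have : (0:ℝ) ≤ (n:ℝ) := Nat.cast_nonneg n
      linarith
    have hlog0 : 0 ≤ Real.log ((k:ℝ)+1) := by
      apply Real.log_nonneg; push_cast; linarith [Nat.cast_nonneg (α := ℝ) k]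
    have harg : τ * ∑ j ∈ range k, 1/((n:ℝ)+(j:ℝ)+1) ≤ max 0 τ * (1 + Real.log ((k:ℝ)+1)) := by
      rcases le_or_gt τ 0 with h | h
      · have h1 : τ * ∑ j ∈ range k, 1/((n:ℝ)+(j:ℝ)+1) ≤ 0 := mul_nonpos_of_nonpos_of_nonneg h hH0
        have h2 : 0 ≤ max 0 τ * (1 + Real.log ((k:ℝ)+1)) := by
          apply mul_nonneg (le_max_left _ _); linarith
        linarith
      · rw [max_eq_right h.le]
        exact mul_le_mul_of_nonneg_left hHle h.le
    calc Real.exp (τ * ∑ j ∈ range k, 1/((n:ℝ)+(j:ℝ)+1))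
        ≤ Real.exp (max 0 τ * (1 + Real.log ((k:ℝ)+1))) := Real.exp_le_exp.mpr harg
      _ = Real.exp (max 0 τ) * ((k:ℝ)+1) ^ (max 0 τ) := by
          rw [Real.rpow_def_of_pos hk1, mul_add, mul_one, Real.exp_add, mul_comm (Real.log _)]
  calc C * Real.exp (τ * ∑ j ∈ range k, 1/((n:ℝ)+(j:ℝ)+1)) * ‖poch (v + n) k‖
      ≤ C * (Real.exp (max 0 τ) * ((k:ℝ)+1) ^ (max 0 τ)) * ‖poch (v + n) k‖ := by
        apply mul_le_mul_of_nonneg_right _ (norm_nonneg _)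
        exact mul_le_mul_of_nonneg_left hexp hC.le
    _ = C * Real.exp (max 0 τ) * ((k:ℝ)+1) ^ (max 0 τ) * ‖poch (v + n) k‖ := by ring

lemma pochB (u v : ℂ) (hv : ∀ m : ℕ, v ≠ -(m:ℂ)) :
    ∃ C > (0:ℝ), ∀ k : ℕ, ‖poch u k‖ ≤ C * ((k:ℝ)+1) ^ ((u-v).re) * ‖poch v k‖ := by
  obtain ⟨C, hC, hcore⟩ := poch_core u v hv
  set σ := (u-v).re with hσ
  refine ⟨C * Real.exp |σ|, by positivity, fun k => ?_⟩
  have h0 := hcore 0 k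
  simp only [Nat.cast_zero, add_zero, zero_add] at h0
  have hk1 : (0:ℝ) < (k:ℝ)+1 := by positivity
  have hH := harmonic_lb k
  have hHub := harmonic_ub k
  have harg : σ * ∑ j ∈ range k, 1/((j:ℝ)+1) ≤ |σ| + σ * Real.log ((k:ℝ)+1) := by
    rcases le_or_gt 0 σ with h | h
    · have := mul_le_mul_of_nonneg_left hHub h
      rw [_root_.abs_of_nonneg h]; nlinarith
    · have := mul_le_mul_of_nonpos_left hH h.le
      rw [_root_.abs_of_neg h]; nlinarith
  refine le_trans h0 ?_
  have hexp : Real.exp (σ * ∑ j ∈ range k, 1/((j:ℝ)+1)) ≤ Real.exp |σ| * ((k:ℝ)+1) ^ σ := by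
    calc Real.exp (σ * ∑ j ∈ range k, 1/((j:ℝ)+1)) ≤ Real.exp (|σ| + σ * Real.log ((k:ℝ)+1)) :=
          Real.exp_le_exp.mpr harg
      _ = Real.exp |σ| * ((k:ℝ)+1) ^ σ := by
          rw [Real.exp_add, Real.rpow_def_of_pos hk1, mul_comm (Real.log _)]
  calc C * Real.exp (σ * ∑ j ∈ range k, 1/((j:ℝ)+1)) * ‖poch v k‖
      ≤ C * (Real.exp |σ| * ((k:ℝ)+1) ^ σ) * ‖poch v k‖ := by
        apply mul_le_mul_of_nonneg_right _ (norm_nonneg _)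
        exact mul_le_mul_of_nonneg_left hexp hC.le
    _ = C * Real.exp |σ| * ((k:ℝ)+1) ^ σ * ‖poch v k‖ := by ring

lemma tsum_exp_eq (y : ℝ) : ∑' k : ℕ, y^k / (k.factorial : ℝ) = Real.exp y := by
  rw [Real.exp_eq_exp_ℝ, NormedSpace.exp_eq_tsum_div]

lemma term_le_exp (y : ℝ) (hy : 0 ≤ y) (k : ℕ) : y^k / (k.factorial : ℝ) ≤ Real.exp y := by
  rw [← tsum_exp_eq]
  exact Summable.le_tsum (Real.summable_pow_div_factorial y) k
    (fun j _ => by positivity)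

lemma summable_aux (p z : ℝ) (hz : 0 ≤ z) :
    Summable (fun k : ℕ => ((k:ℝ)+1)^p * z^k / (k.factorial : ℝ)) := by
  set M : ℕ := ⌈|p|⌉₊ with hM
  have hkey : ∀ k : ℕ, ((k:ℝ)+1)^p * z^k / (k.factorial : ℝ) ≤ ((2:ℝ)^M * z)^k / (k.factorial : ℝ) := by
    intro k
    have hk1 : (1:ℝ) ≤ (k:ℝ)+1 := by linarith [Nat.cast_nonneg (α := ℝ) k]
    have h1 : ((k:ℝ)+1)^p ≤ ((k:ℝ)+1)^(M:ℝ) := by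
      apply Real.rpow_le_rpow_of_exponent_le hk1
      calc p ≤ |p| := le_abs_self p
        _ ≤ M := Nat.le_ceil _
    have h2 : ((k:ℝ)+1)^((M:ℕ):ℝ) = ((k:ℝ)+1)^(M:ℕ) := Real.rpow_natCast _ M
    have h3 : ((k:ℝ)+1)^(M:ℕ) ≤ ((2:ℝ)^k)^(M:ℕ) := by
      apply pow_le_pow_left₀ (by positivity)
      have h2k : (k:ℝ)+1 ≤ (2:ℝ)^k := by exact_mod_cast (show k < 2^k from Nat.lt_two_pow_self)
      linarith
    have h4 : ((2:ℝ)^k)^(M:ℕ) = ((2:ℝ)^(M:ℕ))^k := by rw [← pow_mul, ← pow_mul, Nat.mul_comm]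
    have h5 : ((k:ℝ)+1)^p * z^k ≤ ((2:ℝ)^M * z)^k := by
      rw [mul_pow]
      apply mul_le_mul_of_nonneg_right _ (by positivity)
      calc ((k:ℝ)+1)^p ≤ ((k:ℝ)+1)^(M:ℕ) := h2 ▸ h1
        _ ≤ ((2:ℝ)^k)^(M:ℕ) := h3
        _ = ((2:ℝ)^(M:ℕ))^k := h4
    have hfac : (0:ℝ) < (k.factorial : ℝ) := by exact_mod_cast k.factorial_pos
    gcongr
  exact Summable.of_nonneg_of_le (fun k => by positivity) hkey
    (Real.summable_pow_div_factorial _)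

lemma exp_sub_one_le (x : ℝ) (hx : 0 ≤ x) : Real.exp x - 1 ≤ x * Real.exp x := by
  have h := Real.add_one_le_exp (-x)
  rw [Real.exp_neg] at h
  have hp := Real.exp_pos x
  have h2 : (-x + 1) * Real.exp x ≤ 1 := by
    have := mul_le_mul_of_nonneg_right h hp.le
    rwa [inv_mul_cancel₀ hp.ne'] at this
  nlinarith

lemma sum_bound_nonneg (p : ℝ) (hp : 0 ≤ p) :
    ∀ z : ℝ, 1 ≤ z → ∑' k : ℕ, ((k:ℝ)+1)^p * z^k / (k.factorial : ℝ)
      ≤ Real.exp (p * Real.exp p) * z^p * Real.exp z := by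
  intro z hz
  have hz0 : (0:ℝ) < z := lt_of_lt_of_le one_pos hz
  have hterm : ∀ k : ℕ, ((k:ℝ)+1)^p * z^k / (k.factorial : ℝ) ≤
      (z^p * Real.exp (p/z - p)) * ((Real.exp (p/z) * z)^k / (k.factorial : ℝ)) := by
    intro k
    have hxz : ((k:ℝ)+1)/z ≤ Real.exp (((k:ℝ)+1)/z - 1) := by
      have := Real.add_one_le_exp (((k:ℝ)+1)/z - 1); linarith
    have h1 : (((k:ℝ)+1)/z)^p ≤ Real.exp (((k:ℝ)+1)/z - 1) ^ p :=
      Real.rpow_le_rpow (by positivity) hxz hp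
    have h2 : Real.exp (((k:ℝ)+1)/z - 1) ^ p = Real.exp ((((k:ℝ)+1)/z - 1) * p) :=
      (Real.exp_mul _ p).symm
    have h3 : (((k:ℝ)+1)/z)^p = ((k:ℝ)+1)^p / z^p :=
      Real.div_rpow (by positivity) hz0.le p
    have h4 : ((k:ℝ)+1)^p ≤ z^p * Real.exp ((((k:ℝ)+1)/z - 1) * p) := by
      rw [h2, h3] at h1
      calc ((k:ℝ)+1)^p = (((k:ℝ)+1)^p / z^p) * z^p := by
            field_simp
        _ ≤ Real.exp ((((k:ℝ)+1)/z - 1) * p) * z^p := by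
            apply mul_le_mul_of_nonneg_right h1 (by positivity)
        _ = z^p * Real.exp ((((k:ℝ)+1)/z - 1) * p) := by ring
    have h5 : Real.exp ((((k:ℝ)+1)/z - 1) * p) = Real.exp (p/z - p) * Real.exp (p/z)^k := by
      rw [← Real.exp_nat_mul, ← Real.exp_add]
      congr 1
      field_simp
      ring
    have h6 : ((k:ℝ)+1)^p * z^k ≤ (z^p * Real.exp (p/z - p)) * (Real.exp (p/z) * z)^k := by
      rw [mul_pow]
      calc ((k:ℝ)+1)^p * z^k ≤ (z^p * Real.exp ((((k:ℝ)+1)/z - 1) * p)) * z^k :=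
            mul_le_mul_of_nonneg_right h4 (by positivity)
        _ = (z^p * Real.exp (p/z - p)) * (Real.exp (p/z)^k * z^k) := by rw [h5]; ring
    have hfac : (0:ℝ) < (k.factorial : ℝ) := by exact_mod_cast k.factorial_pos
    rw [← mul_div_assoc, div_le_div_iff₀ hfac hfac]
    exact mul_le_mul_of_nonneg_right h6 hfac.le
  have hsum1 := summable_aux p z hz0.le
  have hsum2 : Summable (fun k : ℕ => (Real.exp (p/z) * z)^k / (k.factorial : ℝ)) :=
    Real.summable_pow_div_factorial _
  have hle := Summable.tsum_le_tsum hterm hsum1 (hsum2.mul_left _)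
  rw [tsum_mul_left, tsum_exp_eq] at hle
  refine le_trans hle ?_
  -- z^p * exp(p/z - p) * exp(exp(p/z) * z) ≤ exp(p exp p) * z^p * exp z
  have hpz : p/z ≤ p := by
    rw [div_le_iff₀ hz0]; nlinarith
  have hA : Real.exp (p/z - p) ≤ 1 := by
    rw [Real.exp_le_one_iff]; linarith
  have hB : Real.exp (p/z) * z ≤ z + p * Real.exp p := by
    have h7 := exp_sub_one_le (p/z) (by positivity)
    have h8 : Real.exp (p/z) ≤ Real.exp p := Real.exp_le_exp.mpr hpz
    have h9 : z * (Real.exp (p/z) - 1) ≤ p * Real.exp (p/z) := by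
      have := mul_le_mul_of_nonneg_left h7 hz0.le
      calc z * (Real.exp (p/z) - 1) ≤ z * ((p/z) * Real.exp (p/z)) := this
        _ = p * Real.exp (p/z) := by field_simp
    nlinarith [Real.exp_pos (p/z)]
  calc z^p * Real.exp (p/z - p) * Real.exp (Real.exp (p/z) * z)
      ≤ z^p * 1 * Real.exp (z + p * Real.exp p) := by
        apply mul_le_mul (mul_le_mul_of_nonneg_left hA (by positivity))
          (Real.exp_le_exp.mpr hB) (Real.exp_pos _).le (by positivity)
    _ = Real.exp (p * Real.exp p) * z^p * Real.exp z := by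
        rw [Real.exp_add]; ring

set_option maxHeartbeats 1000000 in
lemma sum_bound_neg (p : ℝ) (hp : p < 0) :
    ∃ z₁ : ℝ, 1 ≤ z₁ ∧ ∀ z : ℝ, z₁ ≤ z → ∑' k : ℕ, ((k:ℝ)+1)^p * z^k / (k.factorial : ℝ)
      ≤ (1 + (2:ℝ)^(-p)) * z^p * Real.exp z := by
  obtain ⟨c, hcpos, hc⟩ : ∃ c : ℝ, 0 < c ∧ c = (1 - Real.log 2)/2 :=
    ⟨(1 - Real.log 2)/2, by have h : Real.log 2 < 1 := lt_trans Real.log_two_lt_d9 (by norm_num); linarith, rfl⟩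
  have htend := tendsto_rpow_mul_exp_neg_mul_atTop_nhds_zero (-p) c hcpos
  have hev : ∀ᶠ x in Filter.atTop, x ^ (-p) * Real.exp (-c * x) < 1/2 :=
    htend.eventually_lt_const (by norm_num)
  obtain ⟨z₁', hz₁'⟩ := Filter.eventually_atTop.mp hev
  refine ⟨max z₁' 2, le_trans (by norm_num) (le_max_right _ _), fun z hz => ?_⟩
  have hz2 : (2:ℝ) ≤ z := le_trans (le_max_right _ _) hz
  have hz0 : (0:ℝ) < z := by linarith
  have h12 : z ^ (-p) * Real.exp (-c * z) < 1/2 := hz₁' z (le_trans (le_max_left _ _) hz)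
  obtain ⟨m, hm_le, hm_gt⟩ : ∃ m : ℕ, (m:ℝ) ≤ z/2 + 1 ∧ z/2 < (m:ℝ) := by
    refine ⟨⌊z/2⌋₊ + 1, ?_, ?_⟩
    · push_cast
      have := Nat.floor_le (show (0:ℝ) ≤ z/2 by linarith)
      linarith
    · push_cast
      exact Nat.lt_floor_add_one _
  have hsum := summable_aux p z hz0.le
  have hsum0 : Summable (fun k : ℕ => z^k / (k.factorial : ℝ)) :=
    Real.summable_pow_div_factorial z
  have hsplit := Summable.sum_add_tsum_nat_add m hsum
  rw [← hsplit]
  have hX : (0:ℝ) < z^p := Real.rpow_pos_of_pos hz0 p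
  -- Head bound
  have hS : ∑ k ∈ Finset.range m, ((k:ℝ)+1)^p * z^k / (k.factorial : ℝ) ≤ z^p * Real.exp z := by
    have hstep : ∀ k ∈ Finset.range m, ((k:ℝ)+1)^p * z^k / (k.factorial : ℝ) ≤
        Real.exp (z/2) * 2^k := by
      intro k hk
      have hk1 : (1:ℝ) ≤ (k:ℝ)+1 := by linarith [Nat.cast_nonneg (α := ℝ) k]
      have hfac : (0:ℝ) < (k.factorial : ℝ) := by exact_mod_cast k.factorial_pos
      have h1 : ((k:ℝ)+1)^p ≤ 1 := Real.rpow_le_one_of_one_le_of_nonpos hk1 hp.le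
      have h3 : (z/2)^k * 2^k = z^k := by
        rw [div_pow, div_mul_cancel₀ _ (pow_ne_zero k two_ne_zero)]
      have h4 : (z/2)^k / (k.factorial : ℝ) ≤ Real.exp (z/2) :=
        term_le_exp (z/2) (by linarith) k
      have h2 : z^k / (k.factorial : ℝ) ≤ Real.exp (z/2) * 2^k := by
        calc z^k / (k.factorial : ℝ) = ((z/2)^k / (k.factorial : ℝ)) * 2^k := by
              rw [← h3]; ring
          _ ≤ Real.exp (z/2) * 2^k := by
              apply mul_le_mul_of_nonneg_right h4 (by positivity)
      calc ((k:ℝ)+1)^p * z^k / (k.factorial : ℝ) ≤ 1 * (z^k / (k.factorial : ℝ)) := by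
            rw [mul_div_assoc]
            apply mul_le_mul_of_nonneg_right h1 (by positivity)
        _ = z^k / (k.factorial : ℝ) := by ring
        _ ≤ Real.exp (z/2) * 2^k := h2
    have hgeom : ∑ k ∈ Finset.range m, (2:ℝ)^k = 2^m - 1 := by
      have := geom_sum_eq (show (2:ℝ) ≠ 1 by norm_num) m
      rw [this]; norm_num
    have h5 : ∑ k ∈ Finset.range m, ((k:ℝ)+1)^p * z^k / (k.factorial : ℝ) ≤
        Real.exp (z/2) * (2^m - 1) := by
      calc ∑ k ∈ Finset.range m, ((k:ℝ)+1)^p * z^k / (k.factorial : ℝ)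
          ≤ ∑ k ∈ Finset.range m, Real.exp (z/2) * 2^k := Finset.sum_le_sum hstep
        _ = Real.exp (z/2) * (2^m - 1) := by rw [← Finset.mul_sum, hgeom]
    have h2m : (2:ℝ)^m ≤ 2 * Real.exp (Real.log 2 * (z/2)) := by
      calc (2:ℝ)^m = (2:ℝ)^(m:ℝ) := (Real.rpow_natCast 2 m).symm
        _ ≤ (2:ℝ)^(z/2+1 : ℝ) := Real.rpow_le_rpow_of_exponent_le one_le_two hm_le
        _ = 2 * Real.exp (Real.log 2 * (z/2)) := by
            rw [Real.rpow_def_of_pos (by norm_num : (0:ℝ) < 2)]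
            rw [mul_add, mul_one, Real.exp_add, Real.exp_log (by norm_num : (0:ℝ) < 2)]
            ring
    have hinv : z^(-p) = (z^p)⁻¹ := Real.rpow_neg hz0.le p
    have hecz := Real.exp_pos (c*z)
    have h6 : 2 * (z^p)⁻¹ ≤ Real.exp (c*z) := by
      rw [hinv] at h12
      have h7 : Real.exp (-c*z) = (Real.exp (c*z))⁻¹ := by
        rw [← Real.exp_neg]; ring_nf
      rw [h7] at h12
      have h8 := mul_le_mul_of_nonneg_right h12.le hecz.le
      rw [mul_assoc, inv_mul_cancel₀ hecz.ne', mul_one] at h8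
      linarith
    have h8 : (2:ℝ) ≤ z^p * Real.exp (c*z) := by
      have h9 := mul_le_mul_of_nonneg_right h6 hX.le
      rw [mul_assoc, inv_mul_cancel₀ hX.ne', mul_one] at h9
      calc (2:ℝ) ≤ Real.exp (c*z) * z^p := h9
        _ = z^p * Real.exp (c*z) := by ring
    have hE : Real.exp (c*z) * Real.exp (z/2 + Real.log 2 * (z/2)) = Real.exp z := by
      rw [← Real.exp_add]; congr 1; rw [hc]; ring
    calc ∑ k ∈ Finset.range m, ((k:ℝ)+1)^p * z^k / (k.factorial : ℝ)
        ≤ Real.exp (z/2) * (2^m - 1) := h5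
      _ ≤ Real.exp (z/2) * (2 * Real.exp (Real.log 2 * (z/2))) := by
          apply mul_le_mul_of_nonneg_left _ (Real.exp_pos _).le
          linarith
      _ = 2 * Real.exp (z/2 + Real.log 2 * (z/2)) := by
          rw [Real.exp_add]; ring
      _ ≤ (z^p * Real.exp (c*z)) * Real.exp (z/2 + Real.log 2 * (z/2)) := by
          apply mul_le_mul_of_nonneg_right h8 (Real.exp_pos _).le
      _ = z^p * Real.exp z := by rw [mul_assoc, hE]
  -- Tail bound
  have hT : ∑' i : ℕ, (((i+m : ℕ):ℝ)+1)^p * z^(i+m) / ((i+m).factorial : ℝ)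
      ≤ (2:ℝ)^(-p) * z^p * Real.exp z := by
    have hterm : ∀ i : ℕ, (((i+m : ℕ):ℝ)+1)^p * z^(i+m) / ((i+m).factorial : ℝ) ≤
        (z/2)^p * (z^(i+m) / ((i+m).factorial : ℝ)) := by
      intro i
      have hfac : (0:ℝ) < ((i+m).factorial : ℝ) := by exact_mod_cast (i+m).factorial_pos
      have hbase : z/2 ≤ ((i+m : ℕ):ℝ)+1 := by
        have h0 : (m:ℝ) ≤ ((i+m : ℕ):ℝ) := by exact_mod_cast Nat.le_add_left m i
        linarith
      have h1 : (((i+m : ℕ):ℝ)+1)^p ≤ (z/2)^p :=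
        Real.rpow_le_rpow_of_nonpos (by linarith) hbase hp.le
      rw [mul_div_assoc]
      apply mul_le_mul_of_nonneg_right h1 (by positivity)
    have hs1 : Summable (fun i : ℕ => (((i+m : ℕ):ℝ)+1)^p * z^(i+m) / ((i+m).factorial : ℝ)) :=
      (summable_nat_add_iff (f := fun k : ℕ => ((k:ℝ)+1)^p * z^k / (k.factorial : ℝ)) m).mpr hsum
    have hs2 : Summable (fun i : ℕ => z^(i+m) / ((i+m).factorial : ℝ)) :=
      (summable_nat_add_iff (f := fun k : ℕ => z^k / (k.factorial : ℝ)) m).mpr hsum0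
    have hle := Summable.tsum_le_tsum hterm hs1 (hs2.mul_left _)
    rw [tsum_mul_left] at hle
    have htail0 : ∑' i : ℕ, z^(i+m) / ((i+m).factorial : ℝ) ≤ Real.exp z := by
      have h9 := Summable.sum_add_tsum_nat_add m hsum0
      rw [tsum_exp_eq] at h9
      have hhead0 : (0:ℝ) ≤ ∑ k ∈ Finset.range m, z^k / (k.factorial : ℝ) := by
        apply Finset.sum_nonneg; intro k _; positivity
      linarith
    have hhalf : ((z/2):ℝ)^p = (2:ℝ)^(-p) * z^p := by
      rw [show z/2 = z*2⁻¹ by ring, Real.mul_rpow hz0.le (by norm_num),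
        Real.inv_rpow (by norm_num : (0:ℝ) ≤ 2), ← Real.rpow_neg (by norm_num : (0:ℝ) ≤ 2)]
      ring
    have hhp : (0:ℝ) ≤ (z/2)^p := Real.rpow_nonneg (by linarith) p
    calc ∑' i : ℕ, (((i+m : ℕ):ℝ)+1)^p * z^(i+m) / ((i+m).factorial : ℝ)
        ≤ (z/2)^p * ∑' i : ℕ, z^(i+m) / ((i+m).factorial : ℝ) := hle
      _ ≤ (z/2)^p * Real.exp z := mul_le_mul_of_nonneg_left htail0 hhp
      _ = (2:ℝ)^(-p) * z^p * Real.exp z := by rw [hhalf]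
  have hfinal := add_le_add hS hT
  calc (∑ k ∈ Finset.range m, ((k:ℝ)+1)^p * z^k / (k.factorial : ℝ)) +
        ∑' i : ℕ, (((i+m : ℕ):ℝ)+1)^p * z^(i+m) / ((i+m).factorial : ℝ)
      ≤ z^p * Real.exp z + (2:ℝ)^(-p) * z^p * Real.exp z := hfinal
    _ = (1 + (2:ℝ)^(-p)) * z^p * Real.exp z := by ring

lemma sum_bound (p : ℝ) : ∃ C > (0:ℝ), ∃ z₁ : ℝ, 1 ≤ z₁ ∧ ∀ z : ℝ, z₁ ≤ z →
    ∑' k : ℕ, ((k:ℝ)+1)^p * z^k / (k.factorial : ℝ) ≤ C * z^p * Real.exp z := by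
  rcases le_or_gt 0 p with h | h
  · exact ⟨Real.exp (p * Real.exp p), Real.exp_pos _, 1, le_refl 1, fun z hz =>
      sum_bound_nonneg p h z hz⟩
  · obtain ⟨z₁, hz₁, hbound⟩ := sum_bound_neg p h
    exact ⟨1 + (2:ℝ)^(-p), by positivity, z₁, hz₁, hbound⟩

theorem stmt9 (a b c d : ℂ)
    (hc : ∀ m : ℕ, c ≠ -(m : ℂ)) (hd : ∀ m : ℕ, d ≠ -(m : ℂ))
    (p : ℝ) (hp : p = (a - c).re + max 0 (b - d).re) :
    ∃ K > (0 : ℝ), ∃ z₀ > (0 : ℝ), ∀ (n : ℕ) (z : ℝ), z₀ ≤ z →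
      ‖F22 a (b + n) c (d + n) (z : ℂ)‖ ≤
        K * ((n : ℝ) + 1) ^ (2 * ‖b - d‖) * z ^ p * Real.exp z := by
  obtain ⟨C1, hC1, hB⟩ := pochB a c hc
  obtain ⟨C2, hC2, hA⟩ := pochA b d hd
  obtain ⟨C3, hC3, z₁, hz₁1, hS⟩ := sum_bound p
  refine ⟨C1*C2*C3, by positivity, z₁, lt_of_lt_of_le one_pos hz₁1, fun n z hz => ?_⟩
  have hz1 : (1:ℝ) ≤ z := le_trans hz₁1 hz
  have hz0 : (0:ℝ) < z := lt_of_lt_of_le one_pos hz1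
  have hpc : ∀ k : ℕ, poch c k ≠ 0 := by
    intro k
    rw [poch, Finset.prod_ne_zero_iff]
    intro j _ hj
    exact hc j (eq_neg_of_add_eq_zero_left hj)
  have hpd : ∀ k : ℕ, poch (d + n) k ≠ 0 := by
    intro k
    rw [poch, Finset.prod_ne_zero_iff]
    intro j _ hj
    apply hd (n + j)
    have h2 : d + ((n + j : ℕ):ℂ) = 0 := by push_cast; rw [← add_assoc]; exact hj
    exact eq_neg_of_add_eq_zero_left h2
  set t : ℕ → ℂ := fun k => poch a k * poch (b + n) k / (poch c k * poch (d + n) k)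
    * (z:ℂ)^k / (k.factorial : ℂ) with ht
  set g : ℕ → ℝ := fun k => (C1*C2) * (((k:ℝ)+1)^p * z^k / (k.factorial : ℝ)) with hg
  have hnorm_t : ∀ k : ℕ, ‖t k‖ = ‖poch a k‖ * ‖poch (b + n) k‖ /
      (‖poch c k‖ * ‖poch (d + n) k‖) * z^k / (k.factorial : ℝ) := by
    intro k
    rw [ht]
    simp only [norm_div, norm_mul, norm_pow]
    rw [Complex.norm_real, Real.norm_eq_abs, abs_of_pos hz0, Complex.norm_natCast]
  have hbound : ∀ k : ℕ, ‖t k‖ ≤ g k := by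
    intro k
    rw [hnorm_t k, hg]
    have hk1 : (0:ℝ) < (k:ℝ)+1 := by positivity
    have hpcn : 0 < ‖poch c k‖ := norm_pos_iff.mpr (hpc k)
    have hpdn : 0 < ‖poch (d + n) k‖ := norm_pos_iff.mpr (hpd k)
    have hfac : (0:ℝ) < (k.factorial:ℝ) := by exact_mod_cast k.factorial_pos
    have hnum : ‖poch a k‖ * ‖poch (b + n) k‖ ≤
        (C1*C2*(((k:ℝ)+1)^p)) * (‖poch c k‖ * ‖poch (d + n) k‖) := by
      have h3 := mul_le_mul (hB k) (hA n k) (norm_nonneg _) (by positivity)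
      calc ‖poch a k‖ * ‖poch (b + n) k‖
          ≤ (C1 * ((k:ℝ)+1)^((a-c).re) * ‖poch c k‖) *
            (C2 * ((k:ℝ)+1)^(max 0 (b-d).re) * ‖poch (d + n) k‖) := h3
        _ = (C1*C2*(((k:ℝ)+1)^((a-c).re) * ((k:ℝ)+1)^(max 0 (b-d).re))) *
            (‖poch c k‖*‖poch (d + n) k‖) := by ring
        _ = (C1*C2*(((k:ℝ)+1)^p)) * (‖poch c k‖*‖poch (d + n) k‖) := by
            rw [← Real.rpow_add hk1, ← hp]
    have hdiv : ‖poch a k‖ * ‖poch (b + n) k‖ / (‖poch c k‖ * ‖poch (d + n) k‖) ≤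
        C1*C2*(((k:ℝ)+1)^p) := by
      rw [div_le_iff₀ (by positivity)]
      exact hnum
    calc ‖poch a k‖ * ‖poch (b + n) k‖ / (‖poch c k‖ * ‖poch (d + n) k‖) * z^k / (k.factorial:ℝ)
        ≤ (C1*C2*(((k:ℝ)+1)^p)) * z^k / (k.factorial:ℝ) := by gcongr
      _ = (C1*C2) * (((k:ℝ)+1)^p * z^k / (k.factorial : ℝ)) := by ring
  have hgsum : Summable g := (summable_aux p z hz0.le).mul_left _
  have htsum : Summable (fun k => ‖t k‖) :=
    Summable.of_nonneg_of_le (fun k => norm_nonneg _) hbound hgsum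
  have hone : (1:ℝ) ≤ ((n:ℝ)+1)^(2*‖b-d‖) := by
    calc (1:ℝ) = ((n:ℝ)+1)^(0:ℝ) := (Real.rpow_zero _).symm
      _ ≤ ((n:ℝ)+1)^(2*‖b-d‖) := Real.rpow_le_rpow_of_exponent_le
          (by linarith [Nat.cast_nonneg (α:=ℝ) n]) (by positivity)
  have hzp : (0:ℝ) < z^p := Real.rpow_pos_of_pos hz0 p
  calc ‖F22 a (b + n) c (d + n) (z:ℂ)‖ = ‖∑' k, t k‖ := rfl
    _ ≤ ∑' k, ‖t k‖ := norm_tsum_le_tsum_norm htsum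
    _ ≤ ∑' k, g k := Summable.tsum_le_tsum hbound htsum hgsum
    _ = (C1*C2) * ∑' k : ℕ, ((k:ℝ)+1)^p * z^k/(k.factorial:ℝ) := tsum_mul_left
    _ ≤ (C1*C2) * (C3 * z^p * Real.exp z) :=
        mul_le_mul_of_nonneg_left (hS z hz) (by positivity)
    _ = (C1*C2*C3 * z^p * Real.exp z) * 1 := by ring
    _ ≤ (C1*C2*C3 * z^p * Real.exp z) * (((n:ℝ)+1)^(2*‖b-d‖)) :=
        mul_le_mul_of_nonneg_left hone (by positivity)
    _ = C1*C2*C3 * ((n:ℝ)+1)^(2*‖b-d‖) * z^p * Real.exp z := by ring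
end

section
/- Assume a, b, c ∈ ℂ, c' ∈ ℂ∖ℤ_{≤0}, and a−b ∈ ℂ∖ℤ. Then for all reals γ₂ > 0 and ρ > 1 there exists a constant C > 0 such that for every x ∈ ℂ with |x−1| ≥ ρ and every y ∈ ℂ with |y/(1−x)| ≤ γ₂, the series V₁(x,y) converges absolutely and |V₁(x,y)| ≤ C. -/
open Complex

/-- `n`-th term of the series `V₁(x,y)`. -/
noncomputable def V1term (a b c c' x y : ℂ) (n : ℕ) : ℂ :=
  poch a n * poch (c - b) n / (poch (a - b + 1) n * (n.factorial : ℂ)) *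
    F22 (a - c + 1) (a + n) c' (a - b + 1 + n) (y / (1 - x)) * (1 - x) ^ (-(n : ℂ))

noncomputable def V1 (a b c c' x y : ℂ) : ℂ := ∑' n : ℕ, V1term a b c c' x y n

/-- If `w + j ≠ 0` for all naturals `j`, then `‖w + j‖` is bounded below by a
positive multiple of `1 + j`. -/
lemma aux1 (w : ℂ) (hw : ∀ j : ℕ, w + (j : ℂ) ≠ 0) :
    ∃ ε : ℝ, 0 < ε ∧ ∀ j : ℕ, ε * (1 + j) ≤ ‖w + (j : ℂ)‖ := by
  set N : ℕ := ⌈2 * ‖w‖⌉₊ + 1 with hN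
  have hNpos : 0 < N := Nat.succ_pos _
  obtain ⟨j₀, hj₀mem, hj₀⟩ := Finset.exists_min_image (Finset.range N)
      (fun j => ‖w + (j : ℂ)‖ / (1 + j)) ⟨0, Finset.mem_range.2 hNpos⟩
  refine ⟨min (1/2) (‖w + (j₀ : ℂ)‖ / (1 + j₀)), lt_min (by norm_num)
    (div_pos (norm_pos_iff.2 (hw j₀)) (by positivity)), ?_⟩
  intro j
  rcases lt_or_ge j N with hj | hj
  · calc min (1/2) (‖w + (j₀:ℂ)‖ / (1 + j₀)) * (1 + j)
        ≤ (‖w + (j:ℂ)‖ / (1 + j)) * (1 + j) := by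
          apply mul_le_mul_of_nonneg_right _ (by positivity)
          exact (min_le_right _ _).trans (hj₀ j (Finset.mem_range.2 hj))
      _ = ‖w + (j:ℂ)‖ := div_mul_cancel₀ _ (by positivity)
  · have hjN : (2*‖w‖ : ℝ) + 1 ≤ j := by
      have h1 : (2*‖w‖ : ℝ) ≤ ⌈2*‖w‖⌉₊ := Nat.le_ceil _
      have h2 : (N : ℝ) ≤ j := by exact_mod_cast hj
      have h3 : ((⌈2*‖w‖⌉₊ : ℝ) + 1) = (N:ℝ) := by rw [hN]; push_cast; ring
      linarith
    have h2 : (j:ℝ) - ‖w‖ ≤ ‖w + (j:ℂ)‖ := by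
      have h := norm_sub_norm_le ((j:ℂ)) (w + (j:ℂ))
      have hs : (j:ℂ) - (w + (j:ℂ)) = -w := by ring
      rw [hs, norm_neg] at h
      have hj' : ‖(j:ℂ)‖ = (j:ℝ) := by simp
      linarith
    have hmin : min (1/2) (‖w + (j₀:ℂ)‖ / (1 + j₀)) ≤ 1/2 := min_le_left _ _
    have hjn : (0:ℝ) ≤ 1 + j := by positivity
    nlinarith [norm_nonneg w]

lemma telescope (n : ℕ) : ∏ j ∈ Finset.range n, (((j:ℝ)+2)/((j:ℝ)+1)) = (n:ℝ)+1 := by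
  induction n with
  | zero => simp
  | succ n ih =>
    rw [Finset.prod_range_succ, ih]
    have h : ((n:ℝ)+1) ≠ 0 := by positivity
    push_cast
    field_simp
    ring

lemma bern (t : ℝ) (U : ℕ) (ht : t ≤ U) (j : ℕ) :
    1 + t / ((j:ℝ)+1) ≤ (((j:ℝ)+2)/((j:ℝ)+1))^U := by
  have hj : (0:ℝ) < (j:ℝ)+1 := by positivity
  have h1 : (((j:ℝ)+2)/((j:ℝ)+1)) = 1 + 1/((j:ℝ)+1) := by
    field_simp
    ring
  have hpos : (0:ℝ) < 1/((j:ℝ)+1) := by positivity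
  rw [h1]
  calc 1 + t/((j:ℝ)+1) ≤ 1 + (U:ℝ) * (1/((j:ℝ)+1)) := by
        rw [mul_one_div]; gcongr
    _ ≤ (1 + 1/((j:ℝ)+1))^U := one_add_mul_le_pow (by linarith) U

theorem stmt10 (a b c c' : ℂ)
    (hc' : ∀ m : ℕ, c' ≠ -(m : ℂ)) (hab : ∀ k : ℤ, a - b ≠ (k : ℂ))
    (γ₂ ρ : ℝ) (hγ₂ : 0 < γ₂) (hρ : 1 < ρ) :
    ∃ C > (0 : ℝ), ∀ x y : ℂ, ρ ≤ ‖x - 1‖ → ‖y / (1 - x)‖ ≤ γ₂ →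
      (Summable fun n : ℕ => ‖V1term a b c c' x y n‖) ∧ ‖V1 a b c c' x y‖ ≤ C := by
  have hρ0 : (0:ℝ) < ρ := lt_trans one_pos hρ
  obtain ⟨ε₁, hε₁0, hε₁⟩ := aux1 (a - b + 1) (by
    intro j h
    apply hab (-(j+1))
    push_cast
    linear_combination h)
  obtain ⟨ε₂, hε₂0, hε₂⟩ := aux1 c' (by
    intro j h
    apply hc' j
    linear_combination h)
  set K : ℝ := 1 + ‖b - 1‖ / ε₁ with hK
  set M₁ : ℝ := (‖a - c + 1‖ + 1) / ε₂ with hM₁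
  have hK0 : 0 < K := by positivity
  have hM₁0 : 0 < M₁ := by positivity
  set CF : ℝ := ∑' m : ℕ, (M₁ * K * γ₂) ^ m / (m.factorial : ℝ) with hCFdef
  have hCFs : Summable (fun m : ℕ => (M₁ * K * γ₂) ^ m / (m.factorial : ℝ)) :=
    Real.summable_pow_div_factorial _
  have hCF0 : 0 ≤ CF := tsum_nonneg (fun m => by positivity)
  obtain ⟨U, hU⟩ : ∃ U : ℕ, ‖a - 1‖ ≤ (U:ℝ) := ⟨⌈‖a - 1‖⌉₊, Nat.le_ceil _⟩
  obtain ⟨V, hV⟩ : ∃ V : ℕ, ‖c - a - 1‖ / ε₁ ≤ (V:ℝ) := ⟨⌈‖c - a - 1‖ / ε₁⌉₊, Nat.le_ceil _⟩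
  -- geometric-type dominating series
  have hrinv : ρ⁻¹ < 1 := by
    rw [inv_lt_one_iff₀]
    right; exact hρ
  have hrinv0 : 0 < ρ⁻¹ := by positivity
  have hsW : Summable (fun n : ℕ => ((n:ℝ)) ^ (U+V) * ρ⁻¹ ^ n) :=
    summable_pow_mul_geometric_of_norm_lt_one (U+V)
      (by rw [Real.norm_eq_abs, abs_of_pos hrinv0]; exact hrinv)
  have hs2 : Summable (fun n : ℕ => (((n:ℝ)) + 1) ^ (U+V) * ρ⁻¹ ^ (n+1)) := by
    have h := (summable_nat_add_iff (f := fun n : ℕ => ((n:ℝ)) ^ (U+V) * ρ⁻¹ ^ n) 1).2 hsW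
    apply h.congr
    intro n
    push_cast
    ring
  have hs3 : Summable (fun n : ℕ => CF * ((((n:ℝ)) + 1) ^ (U+V) * ρ⁻¹ ^ n)) := by
    have h2 := hs2.mul_left (CF * ρ)
    apply h2.congr
    intro n
    have hρne : ρ ≠ 0 := ne_of_gt hρ0
    rw [pow_succ]
    field_simp
  have hgnn : ∀ n : ℕ, 0 ≤ CF * ((((n:ℝ)) + 1) ^ (U+V) * ρ⁻¹ ^ n) :=
    fun n => mul_nonneg hCF0 (by positivity)
  refine ⟨(∑' n : ℕ, CF * ((((n:ℝ)) + 1) ^ (U+V) * ρ⁻¹ ^ n)) + 1, ?_, ?_⟩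
  · have : 0 ≤ ∑' n : ℕ, CF * ((((n:ℝ)) + 1) ^ (U+V) * ρ⁻¹ ^ n) := tsum_nonneg hgnn
    linarith
  intro x y hx hy
  -- bound on the inner ₂F₂ series
  have hFbound : ∀ n : ℕ, ‖F22 (a - c + 1) (a + n) c' (a - b + 1 + n) (y/(1-x))‖ ≤ CF := by
    intro n
    have hprod1 : ∀ j : ℕ, ‖a - c + 1 + (j:ℂ)‖ ≤ M₁ * ‖c' + (j:ℂ)‖ := by
      intro j
      have h1 : ‖a - c + 1 + (j:ℂ)‖ ≤ ‖a - c + 1‖ + (j:ℝ) := by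
        calc ‖a - c + 1 + (j:ℂ)‖ ≤ ‖a - c + 1‖ + ‖(j:ℂ)‖ := norm_add_le _ _
          _ = ‖a - c + 1‖ + j := by simp
      have h2 : ε₂ * (1 + j) ≤ ‖c' + (j:ℂ)‖ := hε₂ j
      have h3 : ‖a - c + 1‖ + (j:ℝ) ≤ (‖a - c + 1‖ + 1) * (1 + j) := by
        nlinarith [norm_nonneg (a - c + 1), Nat.cast_nonneg (α := ℝ) j]
      have h4 : (‖a - c + 1‖ + 1) * (1 + (j:ℝ)) = M₁ * (ε₂ * (1 + j)) := by
        rw [hM₁]; field_simp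
      have h5 : M₁ * (ε₂ * (1 + (j:ℝ))) ≤ M₁ * ‖c' + (j:ℂ)‖ :=
        mul_le_mul_of_nonneg_left h2 (le_of_lt hM₁0)
      linarith
    have hprod2 : ∀ j : ℕ, ‖a + (n:ℂ) + (j:ℂ)‖ ≤ K * ‖a - b + 1 + (n:ℂ) + (j:ℂ)‖ := by
      intro j
      have hnorm : ε₁ ≤ ‖a - b + 1 + (n:ℂ) + (j:ℂ)‖ := by
        have hk := hε₁ (n + j)
        have e : (a - b + 1) + ((n + j : ℕ):ℂ) = a - b + 1 + (n:ℂ) + (j:ℂ) := by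
          push_cast; ring
        rw [e] at hk
        nlinarith [Nat.cast_nonneg (α := ℝ) (n + j), hε₁0]
      have h1 : ‖a + (n:ℂ) + (j:ℂ)‖ ≤ ‖a - b + 1 + (n:ℂ) + (j:ℂ)‖ + ‖b - 1‖ := by
        have e : a + (n:ℂ) + (j:ℂ) = (a - b + 1 + (n:ℂ) + (j:ℂ)) + (b - 1) := by ring
        rw [e]; exact norm_add_le _ _
      have h2 : ‖b - 1‖ ≤ (‖b - 1‖ / ε₁) * ‖a - b + 1 + (n:ℂ) + (j:ℂ)‖ := by
        calc ‖b - 1‖ = (‖b - 1‖ / ε₁) * ε₁ := by field_simp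
          _ ≤ _ := mul_le_mul_of_nonneg_left hnorm (by positivity)
      calc ‖a + (n:ℂ) + (j:ℂ)‖
          ≤ ‖a - b + 1 + (n:ℂ) + (j:ℂ)‖ + (‖b - 1‖ / ε₁) * ‖a - b + 1 + (n:ℂ) + (j:ℂ)‖ := by
            linarith
        _ = K * ‖a - b + 1 + (n:ℂ) + (j:ℂ)‖ := by rw [hK]; ring
    have hterm : ∀ m : ℕ,
        ‖poch (a-c+1) m * poch (a+n) m / (poch c' m * poch (a-b+1+n) m) *
          (y/(1-x)) ^ m / (m.factorial : ℂ)‖ ≤ (M₁ * K * γ₂) ^ m / (m.factorial : ℝ) := by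
      intro m
      simp only [poch, norm_div, norm_mul, norm_prod, norm_pow, Complex.norm_natCast]
      rw [div_le_div_iff_of_pos_right (by positivity : (0:ℝ) < (m.factorial : ℝ))]
      have hden0 : 0 < (∏ j ∈ Finset.range m, ‖c' + (j:ℂ)‖) *
          ∏ j ∈ Finset.range m, ‖a - b + 1 + (n:ℂ) + (j:ℂ)‖ := by
        apply mul_pos
        · exact Finset.prod_pos fun j _ => lt_of_lt_of_le (by positivity) (hε₂ j)
        · apply Finset.prod_pos
          intro j _
          have hk := hε₁ (n + j)
          have e : (a - b + 1) + ((n + j : ℕ):ℂ) = a - b + 1 + (n:ℂ) + (j:ℂ) := by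
            push_cast; ring
          rw [e] at hk
          exact lt_of_lt_of_le (by positivity) hk
      rw [mul_pow (M₁ * K) γ₂ m, mul_pow M₁ K m]
      -- reduce to bounding the prefactor ratio and the power of z separately
      have hy' : ‖y‖ / ‖1 - x‖ ≤ γ₂ := by rw [← norm_div]; exact hy
      have hz : (‖y‖ / ‖1 - x‖) ^ m ≤ γ₂ ^ m :=
        pow_le_pow_left₀ (by positivity) hy' m
      have hratio : (∏ j ∈ Finset.range m, ‖a - c + 1 + (j:ℂ)‖) *
          (∏ j ∈ Finset.range m, ‖a + (n:ℂ) + (j:ℂ)‖) /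
          ((∏ j ∈ Finset.range m, ‖c' + (j:ℂ)‖) *
            ∏ j ∈ Finset.range m, ‖a - b + 1 + (n:ℂ) + (j:ℂ)‖) ≤ M₁ ^ m * K ^ m := by
        rw [div_le_iff₀ hden0]
        have hrhs : M₁ ^ m * K ^ m * ((∏ j ∈ Finset.range m, ‖c' + (j:ℂ)‖) *
            ∏ j ∈ Finset.range m, ‖a - b + 1 + (n:ℂ) + (j:ℂ)‖) =
            ∏ j ∈ Finset.range m, (M₁ * ‖c' + (j:ℂ)‖ * (K * ‖a - b + 1 + (n:ℂ) + (j:ℂ)‖)) := by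
          rw [Finset.prod_mul_distrib, Finset.prod_mul_distrib, Finset.prod_mul_distrib,
            Finset.prod_const, Finset.prod_const, Finset.card_range]
          ring
        rw [hrhs, ← Finset.prod_mul_distrib]
        apply Finset.prod_le_prod
        · intro j _; positivity
        · intro j _
          exact mul_le_mul (hprod1 j) (hprod2 j) (norm_nonneg _)
            (by positivity)
      calc (∏ j ∈ Finset.range m, ‖a - c + 1 + (j:ℂ)‖) *
            (∏ j ∈ Finset.range m, ‖a + (n:ℂ) + (j:ℂ)‖) /
            ((∏ j ∈ Finset.range m, ‖c' + (j:ℂ)‖) *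
              ∏ j ∈ Finset.range m, ‖a - b + 1 + (n:ℂ) + (j:ℂ)‖) * (‖y‖ / ‖1 - x‖) ^ m
          ≤ (M₁ ^ m * K ^ m) * γ₂ ^ m := by
            apply mul_le_mul hratio hz (by positivity) (by positivity)
        _ = M₁ ^ m * K ^ m * γ₂ ^ m := by ring
    have hsn : Summable (fun m : ℕ =>
        ‖poch (a-c+1) m * poch (a+n) m / (poch c' m * poch (a-b+1+n) m) *
          (y/(1-x)) ^ m / (m.factorial : ℂ)‖) :=
      Summable.of_nonneg_of_le (fun m => norm_nonneg _) hterm hCFs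
    calc ‖F22 (a - c + 1) (a + n) c' (a - b + 1 + n) (y/(1-x))‖
        ≤ ∑' m : ℕ, ‖poch (a-c+1) m * poch (a+n) m / (poch c' m * poch (a-b+1+n) m) *
            (y/(1-x)) ^ m / (m.factorial : ℂ)‖ := norm_tsum_le_tsum_norm hsn
      _ ≤ ∑' m : ℕ, (M₁ * K * γ₂) ^ m / (m.factorial : ℝ) := Summable.tsum_le_tsum hterm hsn hCFs
      _ = CF := rfl
  -- bound on the outer Pochhammer prefactor
  have hA : ∀ n : ℕ, ‖poch a n * poch (c-b) n / (poch (a-b+1) n * (n.factorial : ℂ))‖ ≤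
      ((n:ℝ)+1) ^ (U+V) := by
    intro n
    simp only [poch, norm_div, norm_mul, norm_prod, Complex.norm_natCast]
    have hden0 : 0 < (∏ j ∈ Finset.range n, ‖a - b + 1 + (j:ℂ)‖) * (n.factorial : ℝ) := by
      apply mul_pos
      · exact Finset.prod_pos fun j _ => lt_of_lt_of_le (by positivity) (hε₁ j)
      · positivity
    rw [div_le_iff₀ hden0]
    have hfact : (∏ j ∈ Finset.range n, ((j:ℝ)+1)) = (n.factorial : ℝ) := by
      rw [← Finset.prod_range_add_one_eq_factorial]
      push_cast
      rfl
    have hfactor : ∀ j : ℕ, ‖a + (j:ℂ)‖ * ‖c - b + (j:ℂ)‖ ≤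
        (((j:ℝ)+2)/((j:ℝ)+1)) ^ (U+V) * (‖a - b + 1 + (j:ℂ)‖ * ((j:ℝ)+1)) := by
      intro j
      have hj1 : (0:ℝ) < (j:ℝ)+1 := by positivity
      have h1 : ‖a + (j:ℂ)‖ ≤ (((j:ℝ)+2)/((j:ℝ)+1)) ^ U * ((j:ℝ)+1) := by
        have hn : ‖a + (j:ℂ)‖ ≤ ‖a - 1‖ + ((j:ℝ)+1) := by
          have e : a + (j:ℂ) = (a - 1) + (1 + (j:ℂ)) := by ring
          rw [e]
          refine (norm_add_le _ _).trans ?_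
          have hne : ‖(1:ℂ) + (j:ℂ)‖ = (j:ℝ)+1 := by
            rw [show (1:ℂ) + (j:ℂ) = ((j+1:ℕ):ℂ) by push_cast; ring, Complex.norm_natCast]
            push_cast; ring
          rw [hne]
        have hb := bern ‖a - 1‖ U hU j
        calc ‖a + (j:ℂ)‖ ≤ ‖a - 1‖ + ((j:ℝ)+1) := hn
          _ = (1 + ‖a - 1‖/((j:ℝ)+1)) * ((j:ℝ)+1) := by field_simp; ring
          _ ≤ (((j:ℝ)+2)/((j:ℝ)+1)) ^ U * ((j:ℝ)+1) :=
            mul_le_mul_of_nonneg_right hb (le_of_lt hj1)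
      have h2 : ‖c - b + (j:ℂ)‖ ≤ (((j:ℝ)+2)/((j:ℝ)+1)) ^ V * ‖a - b + 1 + (j:ℂ)‖ := by
        have hj2 : ε₁ * (1 + (j:ℝ)) ≤ ‖a - b + 1 + (j:ℂ)‖ := hε₁ j
        have hn : ‖c - b + (j:ℂ)‖ ≤ ‖a - b + 1 + (j:ℂ)‖ + ‖c - a - 1‖ := by
          have e : c - b + (j:ℂ) = (a - b + 1 + (j:ℂ)) + (c - a - 1) := by ring
          rw [e]; exact norm_add_le _ _
        have hca : ‖c - a - 1‖ ≤ (V:ℝ)/((j:ℝ)+1) * ‖a - b + 1 + (j:ℂ)‖ := by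
          have h4 : ‖c - a - 1‖ ≤ (V:ℝ) * ε₁ := by
            rw [div_le_iff₀ hε₁0] at hV
            linarith
          calc ‖c - a - 1‖ ≤ (V:ℝ) * ε₁ := h4
            _ = (V:ℝ)/((j:ℝ)+1) * (ε₁ * (1 + (j:ℝ))) := by field_simp; ring
            _ ≤ (V:ℝ)/((j:ℝ)+1) * ‖a - b + 1 + (j:ℂ)‖ :=
              mul_le_mul_of_nonneg_left hj2 (by positivity)
        have hb := bern (V:ℝ) V le_rfl j
        calc ‖c - b + (j:ℂ)‖
            ≤ ‖a - b + 1 + (j:ℂ)‖ + (V:ℝ)/((j:ℝ)+1) * ‖a - b + 1 + (j:ℂ)‖ := by linarith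
          _ = (1 + (V:ℝ)/((j:ℝ)+1)) * ‖a - b + 1 + (j:ℂ)‖ := by ring
          _ ≤ (((j:ℝ)+2)/((j:ℝ)+1)) ^ V * ‖a - b + 1 + (j:ℂ)‖ :=
            mul_le_mul_of_nonneg_right hb (norm_nonneg _)
      calc ‖a + (j:ℂ)‖ * ‖c - b + (j:ℂ)‖
          ≤ ((((j:ℝ)+2)/((j:ℝ)+1)) ^ U * ((j:ℝ)+1)) *
            ((((j:ℝ)+2)/((j:ℝ)+1)) ^ V * ‖a - b + 1 + (j:ℂ)‖) :=
            mul_le_mul h1 h2 (norm_nonneg _) (by positivity)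
        _ = (((j:ℝ)+2)/((j:ℝ)+1)) ^ (U+V) * (‖a - b + 1 + (j:ℂ)‖ * ((j:ℝ)+1)) := by
            rw [pow_add]; ring
    calc (∏ j ∈ Finset.range n, ‖a + (j:ℂ)‖) * ∏ j ∈ Finset.range n, ‖c - b + (j:ℂ)‖
        = ∏ j ∈ Finset.range n, (‖a + (j:ℂ)‖ * ‖c - b + (j:ℂ)‖) :=
          (Finset.prod_mul_distrib).symm
      _ ≤ ∏ j ∈ Finset.range n, ((((j:ℝ)+2)/((j:ℝ)+1)) ^ (U+V) *
            (‖a - b + 1 + (j:ℂ)‖ * ((j:ℝ)+1))) :=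
          Finset.prod_le_prod (fun j _ => by positivity) (fun j _ => hfactor j)
      _ = ((n:ℝ)+1) ^ (U+V) * ((∏ j ∈ Finset.range n, ‖a - b + 1 + (j:ℂ)‖) *
            (n.factorial : ℝ)) := by
          rw [Finset.prod_mul_distrib, Finset.prod_mul_distrib, Finset.prod_pow, telescope,
            hfact]
  -- per-term bound for V₁
  have hx1 : ρ ≤ ‖(1:ℂ) - x‖ := by rw [norm_sub_rev]; exact hx
  have hVbound : ∀ n : ℕ, ‖V1term a b c c' x y n‖ ≤
      CF * ((((n:ℝ)) + 1) ^ (U+V) * ρ⁻¹ ^ n) := by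
    intro n
    have hP : ‖((1:ℂ)-x) ^ (-(n:ℂ))‖ ≤ ρ⁻¹ ^ n := by
      rw [Complex.cpow_neg, Complex.cpow_natCast, norm_inv, norm_pow, inv_pow]
      have h1 : ρ ^ n ≤ ‖(1:ℂ) - x‖ ^ n := pow_le_pow_left₀ (le_of_lt hρ0) hx1 n
      exact inv_anti₀ (by positivity) h1
    simp only [V1term]
    rw [norm_mul, norm_mul]
    calc ‖poch a n * poch (c-b) n / (poch (a-b+1) n * (n.factorial : ℂ))‖ *
          ‖F22 (a - c + 1) (a + n) c' (a - b + 1 + n) (y/(1-x))‖ *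
          ‖((1:ℂ)-x) ^ (-(n:ℂ))‖
        ≤ (((n:ℝ)+1) ^ (U+V) * CF) * ρ⁻¹ ^ n := by
          apply mul_le_mul _ hP (norm_nonneg _) (mul_nonneg (by positivity) hCF0)
          exact mul_le_mul (hA n) (hFbound n) (norm_nonneg _) (by positivity)
      _ = CF * ((((n:ℝ)) + 1) ^ (U+V) * ρ⁻¹ ^ n) := by ring
  have hsum : Summable (fun n : ℕ => ‖V1term a b c c' x y n‖) :=
    Summable.of_nonneg_of_le (fun n => norm_nonneg _) hVbound hs3
  refine ⟨hsum, ?_⟩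
  have h1 : ‖V1 a b c c' x y‖ ≤ ∑' n : ℕ, ‖V1term a b c c' x y n‖ :=
    norm_tsum_le_tsum_norm hsum
  have h2 : (∑' n : ℕ, ‖V1term a b c c' x y n‖) ≤
      ∑' n : ℕ, CF * ((((n:ℝ)) + 1) ^ (U+V) * ρ⁻¹ ^ n) := Summable.tsum_le_tsum hVbound hsum hs3
  linarith
end
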